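/- Let H be the completion of {f ∈ C¹(ℝ) : |f|²_H := |f(0)|² + ∫_ℝ |f'(y)|² e^{−|y|} dy < ∞} under the norm |·|_H. Then H is a separable Hilbert space, Lip₁(ℝ) ⊂ H, and there exists a countable subset Λ ⊂ Lip₁(ℝ) that is dense in Lip₁(ℝ) with respect to the norm |·|_H; concretely, for each f ∈ H the function φ_f(x) := f(0) + ∫₀ˣ [(f'(y) ∧ 1) ∨ (−1)] dy belongs to Lip₁(ℝ), and if Λ_H is a countable dense subset of H then Λ := {φ_f : f ∈ Λ_H} is such a set. -/

import Mathlib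

open MeasureTheory ProbabilityTheory Set Filter

noncomputable section

/-- The σ-algebra on probability measures on `ℝ`, inherited from the canonical
σ-algebra on measures (generated by evaluation maps). -/
instance : MeasurableSpace (ProbabilityMeasure ℝ) :=
  MeasurableSpace.comap ((↑) : ProbabilityMeasure ℝ → Measure ℝ) inferInstance

/-- The 1-Wasserstein distance between two probability measures on `ℝ`,
defined as the infimum of `E|ξ₁ - ξ₂|` over all couplings. -/
def W1 (μ ν : ProbabilityMeasure ℝ) : ℝ :=
  sInf { c | ∃ ρ : Measure (ℝ × ℝ), IsProbabilityMeasure ρ ∧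
      ρ.map Prod.fst = (μ : Measure ℝ) ∧ ρ.map Prod.snd = (ν : Measure ℝ) ∧
      c = ∫ p, |p.1 - p.2| ∂ρ }

/-- Real functions on `ℝ` that are Lipschitz with constant 1. -/
def Lip1 : Set (ℝ → ℝ) := { φ | LipschitzWith 1 φ }

/-- The Dirac point mass at `x`, as a probability measure. -/
def dirac1 (x : ℝ) : ProbabilityMeasure ℝ := ⟨Measure.dirac x, inferInstance⟩

/-- A probability measure on `ℝ` has a finite first moment. -/
def FiniteFirstMoment (μ : ProbabilityMeasure ℝ) : Prop :=
  Integrable (fun z : ℝ => |z|) (μ : Measure ℝ)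

/-- The type of coefficients `σ, h : [0,T] × C_T × C_T × C_T(P₁) → ℝ`. -/
abbrev Coeff : Type :=
  ℝ → (ℝ → ℝ) → (ℝ → ℝ) → (ℝ → ProbabilityMeasure ℝ) → ℝ

/-- The path `x` stopped at time `t`, i.e. `s ↦ x (s ∧ t)`. -/
def stopP {α : Type*} (x : ℝ → α) (t : ℝ) : ℝ → α := fun s => x (min s t)

/-- running supremum over `[0,t]` of the distance between two real paths. -/
def pathSup (x x' : ℝ → ℝ) (t : ℝ) : ℝ := ⨆ s : Icc (0:ℝ) t, |x s.1 - x' s.1|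

/-- running supremum over `[0,t]` of the `W₁`-distance between two measure paths. -/
def measSup (μ μ' : ℝ → ProbabilityMeasure ℝ) (t : ℝ) : ℝ :=
  ⨆ s : Icc (0:ℝ) t, W1 (μ s.1) (μ' s.1)

variable {Ω : Type*} [mΩ : MeasurableSpace Ω]

/-- running supremum `ξ*_t = sup_{s ≤ t} |ξ_s|` of a process. -/
def runSup (ξ : ℝ → Ω → ℝ) (t : ℝ) (ω : Ω) : ℝ := ⨆ s : Icc (0:ℝ) t, |ξ s.1 ω|

/-- The natural filtration `F^Y_t = σ{Y_s : s ≤ t}` of a process `Y`. -/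
def natFilt (Y : ℝ → Ω → ℝ) (t : ℝ) : MeasurableSpace Ω :=
  ⨆ s ∈ Icc (0:ℝ) t, MeasurableSpace.comap (Y s) inferInstance

/-- A process `M` is a martingale on `[0,T]` with respect to the family of
σ-algebras `F` and the measure `P`. -/
def MartOn (T : ℝ) (P : Measure Ω) (F : ℝ → MeasurableSpace Ω) (M : ℝ → Ω → ℝ) : Prop :=
  (∀ t ∈ Icc (0:ℝ) T, Integrable (M t) P ∧ StronglyMeasurable[F t] (M t)) ∧
  ∀ s t : ℝ, s ∈ Icc (0:ℝ) T → t ∈ Icc (0:ℝ) T → s ≤ t → condExp (F s) P (M t) =ᵐ[P] M s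

/-- `(B¹, B²)` is a two-dimensional Brownian motion on `[0,T]` with respect to
the filtration `F` under `P`. -/
structure IsBM2 (T : ℝ) (P : Measure Ω) (F : ℝ → MeasurableSpace Ω)
    (B1 B2 : ℝ → Ω → ℝ) : Prop where
  adapted : ∀ t ∈ Icc (0:ℝ) T, StronglyMeasurable[F t] (B1 t) ∧ StronglyMeasurable[F t] (B2 t)
  start : ∀ᵐ ω ∂P, B1 0 ω = 0 ∧ B2 0 ω = 0
  cont : ∀ᵐ ω ∂P, ContinuousOn (fun t => B1 t ω) (Icc 0 T) ∧
      ContinuousOn (fun t => B2 t ω) (Icc 0 T)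
  incr_law : ∀ s t : ℝ, 0 ≤ s → s ≤ t → t ≤ T →
    P.map (fun ω => (B1 t ω - B1 s ω, B2 t ω - B2 s ω)) =
      (gaussianReal 0 (t - s).toNNReal).prod (gaussianReal 0 (t - s).toNNReal)
  incr_indep : ∀ s t : ℝ, 0 ≤ s → s ≤ t → t ≤ T →
    Indep (MeasurableSpace.comap (fun ω => (B1 t ω - B1 s ω, B2 t ω - B2 s ω))
      inferInstance) (F s) P

/-- Assumption (A1): the coefficients `σ, h` are bounded, progressively
measurable (measurable and non-anticipative in the path variables), and
Lipschitz in `(x, μ)`, uniformly in `(t, y)`, with respect to the sup-norm on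
paths and the `W₁`-distance on measures. -/
structure A1 (T : ℝ) (σc hc : Coeff) : Prop where
  bddσ : ∃ K, ∀ t x y μ, |σc t x y μ| ≤ K
  bddh : ∃ K, ∀ t x y μ, |hc t x y μ| ≤ K
  measσ : Measurable fun p : ℝ × (ℝ → ℝ) × (ℝ → ℝ) × (ℝ → ProbabilityMeasure ℝ) =>
      σc p.1 p.2.1 p.2.2.1 p.2.2.2
  meash : Measurable fun p : ℝ × (ℝ → ℝ) × (ℝ → ℝ) × (ℝ → ProbabilityMeasure ℝ) =>
      hc p.1 p.2.1 p.2.2.1 p.2.2.2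
  nonantσ : ∀ t x y μ, σc t x y μ = σc t (stopP x t) (stopP y t) (stopP μ t)
  nonanth : ∀ t x y μ, hc t x y μ = hc t (stopP x t) (stopP y t) (stopP μ t)
  lip : ∃ C > 0, ∀ t ∈ Icc (0:ℝ) T, ∀ x x' y μ μ',
      |σc t x y μ - σc t x' y μ'| ≤ C * (pathSup x x' t + measSup μ μ' t) ∧
      |hc t x y μ - hc t x' y μ'| ≤ C * (pathSup x x' t + measSup μ μ' t)

/-- A function `f = f(t,x)` of class `C^{1,2}_b([0,T] × ℝ)`: bounded and
continuous, with bounded continuous derivatives `∂_t f`, `∂_x f`, `∂²_{xx} f`. -/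
structure C12b (f : ℝ → ℝ → ℝ) : Prop where
  cont : Continuous fun p : ℝ × ℝ => f p.1 p.2
  bdd : ∃ K, ∀ t x, |f t x| ≤ K
  dt : ∃ ft : ℝ → ℝ → ℝ, (∀ t x, HasDerivAt (fun s => f s x) (ft t x) t) ∧
      Continuous (fun p : ℝ × ℝ => ft p.1 p.2) ∧ ∃ K, ∀ t x, |ft t x| ≤ K
  dx : ∃ fx fxx : ℝ → ℝ → ℝ,
      (∀ t x, HasDerivAt (fun z => f t z) (fx t x) x) ∧
      (∀ t x, HasDerivAt (fun z => fx t z) (fxx t x) x) ∧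
      Continuous (fun p : ℝ × ℝ => fx p.1 p.2) ∧
      Continuous (fun p : ℝ × ℝ => fxx p.1 p.2) ∧
      (∃ K, ∀ t x, |fx t x| ≤ K) ∧ (∃ K, ∀ t x, |fxx t x| ≤ K)

/-- Assumption (A2): the observation coefficient has the separated form
`h(t,x,y_{·∧t}) = Σ_{i=1}^N f_i(t, x_t) g_i(t, y_{·∧t})` with `f_i ∈ C^{1,2}_b`
and `g_i` bounded measurable; in particular `h` depends on the state path only
through its current value and does not depend on the measure variable. -/
def A2 (hc : Coeff) : Prop :=
  ∃ (N : ℕ) (f : Fin N → ℝ → ℝ → ℝ) (g : Fin N → ℝ → (ℝ → ℝ) → ℝ),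
    (∀ i, C12b (f i)) ∧
    (∀ i, Measurable (fun p : ℝ × (ℝ → ℝ) => g i p.1 p.2) ∧
      (∃ K, ∀ t y, |g i t y| ≤ K) ∧ ∀ t y, g i t y = g i t (stopP y t)) ∧
    ∀ t x y μ, hc t x y μ = ∑ i, f i t (x t) * g i t y

/-- Evaluation `σ(t, X_{·∧t}(ω), Y_{·∧t}(ω), μ_{·∧t}(ω))` of a coefficient
along the (stopped) paths of the processes `X, Y, μ`. -/
def coefAt (σc : Coeff) (X Y : ℝ → Ω → ℝ) (μ : ℝ → Ω → ProbabilityMeasure ℝ)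
    (t : ℝ) (ω : Ω) : ℝ :=
  σc t (fun r => X (min r t) ω) (fun r => Y (min r t) ω) (fun r => μ (min r t) ω)

/-- The process `μ` of probability measures is adapted to the filtration
generated by `Y`. -/
def AdaptedMeas (T : ℝ) (Y : ℝ → Ω → ℝ) (μ : ℝ → Ω → ProbabilityMeasure ℝ) : Prop :=
  ∀ t ∈ Icc (0:ℝ) T, Measurable[natFilt Y t] (μ t)

/-- `t ↦ μ_t` is continuous on `[0,T]` for the `W₁`-distance. -/
def W1ContOn (T : ℝ) (μ : ℝ → ProbabilityMeasure ℝ) : Prop :=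
  ∀ t ∈ Icc (0:ℝ) T, ∀ ε > 0, ∃ δ > 0, ∀ s ∈ Icc (0:ℝ) T, |s - t| < δ →
    W1 (μ s) (μ t) < ε

/-- Membership in `S^p_{F^Y}(P₁)` : continuous (in `W₁`), `F^Y`-adapted,
`P₁(ℝ)`-valued processes whose running supremum of the `W₁`-distance to `δ₀`
has a finite `p`-th moment. -/
def MemSp (p T : ℝ) (Q0 : Measure Ω) (Y : ℝ → Ω → ℝ)
    (μ : ℝ → Ω → ProbabilityMeasure ℝ) : Prop :=
  AdaptedMeas T Y μ ∧
  (∀ᵐ ω ∂Q0, W1ContOn T (fun t => μ t ω)) ∧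
  Integrable (fun ω => (⨆ t : Icc (0:ℝ) T, W1 (μ t.1 ω) (dirac1 0)) ^ p) Q0

/-- `X` is a (weak, martingale-problem formulation) solution of
`dX_t = σ(t, X_{·∧t}, Y_{·∧t}, μ_{·∧t}) dB¹_t`, `X_0 = x` : `X` is a continuous
adapted martingale started at `x` whose quadratic variation is
`∫₀ᵗ σ(...)² ds`, whose covariation with `B¹` is `∫₀ᵗ σ(...) ds` and whose
covariation with `Y` vanishes. -/
structure SolvesX (T x : ℝ) (σc : Coeff) (Q0 : Measure Ω) (F : ℝ → MeasurableSpace Ω)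
    (B1 Y : ℝ → Ω → ℝ) (μ : ℝ → Ω → ProbabilityMeasure ℝ) (X : ℝ → Ω → ℝ) : Prop where
  start : ∀ᵐ ω ∂Q0, X 0 ω = x
  cont : ∀ᵐ ω ∂Q0, ContinuousOn (fun t => X t ω) (Icc 0 T)
  mart : MartOn T Q0 F X
  qv : MartOn T Q0 F fun t ω => (X t ω) ^ 2 - ∫ s in (0:ℝ)..t, (coefAt σc X Y μ s ω) ^ 2
  covB1 : MartOn T Q0 F fun t ω => X t ω * B1 t ω - ∫ s in (0:ℝ)..t, coefAt σc X Y μ s ω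
  covY : MartOn T Q0 F fun t ω => X t ω * Y t ω

/-- `L` is a (martingale-problem formulation) solution of
`dL_t = h(t, X_{·∧t}, Y_{·∧t}, μ_{·∧t}) L_t dY_t`, `L_0 = 1` : `L` is a
positive continuous adapted martingale started at `1` with quadratic variation
`∫₀ᵗ (h L)² ds`, covariation `∫₀ᵗ h L ds` with `Y` and vanishing covariation
with `B¹`. -/
structure SolvesL (T : ℝ) (hc : Coeff) (Q0 : Measure Ω) (F : ℝ → MeasurableSpace Ω)
    (B1 Y X : ℝ → Ω → ℝ) (μ : ℝ → Ω → ProbabilityMeasure ℝ) (L : ℝ → Ω → ℝ) : Prop where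
  start : ∀ᵐ ω ∂Q0, L 0 ω = 1
  cont : ∀ᵐ ω ∂Q0, ContinuousOn (fun t => L t ω) (Icc 0 T)
  pos : ∀ᵐ ω ∂Q0, ∀ t ∈ Icc (0:ℝ) T, 0 < L t ω
  mart : MartOn T Q0 F L
  qv : MartOn T Q0 F fun t ω =>
      (L t ω) ^ 2 - ∫ s in (0:ℝ)..t, (coefAt hc X Y μ s ω * L s ω) ^ 2
  covY : MartOn T Q0 F fun t ω =>
      L t ω * Y t ω - ∫ s in (0:ℝ)..t, coefAt hc X Y μ s ω * L s ω
  covB1 : MartOn T Q0 F fun t ω => L t ω * B1 t ω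

/-- `ν` is (a version of) the image `T(μ)` of `μ` under the solution map:
`ν_t(A) = E^{Q⁰}[L^μ_t 1_{X^μ_t ∈ A} | F^Y_t] / E^{Q⁰}[L^μ_t | F^Y_t]`. -/
def IsSolMap (T : ℝ) (Q0 : Measure Ω) (Y X L : ℝ → Ω → ℝ)
    (ν : ℝ → Ω → ProbabilityMeasure ℝ) : Prop :=
  ∀ t ∈ Icc (0:ℝ) T, ∀ A : Set ℝ, MeasurableSet A →
    (fun ω => (((ν t ω : Measure ℝ) A).toReal)) =ᵐ[Q0]
      fun ω => (condExp (natFilt Y t) Q0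
          (fun ω' => A.indicator (fun _ => (1:ℝ)) (X t ω') * L t ω') ω) /
        (condExp (natFilt Y t) Q0 (L t) ω)

/-- `ν` is (a version of) the conditional law process `μ^{X|Y}` of `X` given the
filtration generated by `Y`, under the measure `P`. -/
def IsCondLaw (T : ℝ) (P : Measure Ω) (Y X : ℝ → Ω → ℝ)
    (ν : ℝ → Ω → ProbabilityMeasure ℝ) : Prop :=
  AdaptedMeas T Y ν ∧
  ∀ t ∈ Icc (0:ℝ) T, ∀ A : Set ℝ, MeasurableSet A →
    (fun ω => (((ν t ω : Measure ℝ) A).toReal)) =ᵐ[P]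
      condExp (natFilt Y t) P (fun ω' => A.indicator (fun _ => (1:ℝ)) (X t ω'))

end
noncomputable section

open scoped ENNReal

/-- The pre-Hilbert class `ℍ₀ = {f ∈ C¹(ℝ) : |f(0)|² + ∫ |f'(y)|² e^{-|y|} dy < ∞}`. -/
def preH (f : ℝ → ℝ) : Prop :=
  ContDiff ℝ 1 f ∧ Integrable fun y => (deriv f y) ^ 2 * Real.exp (-|y|)

/-- The squared `ℍ`-norm `|f|²_ℍ = |f(0)|² + ∫ |f'(y)|² e^{-|y|} dy`. -/
def HnormSq (f : ℝ → ℝ) : ℝ := (f 0) ^ 2 + ∫ y, (deriv f y) ^ 2 * Real.exp (-|y|)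

/-- The weighted measure `e^{-|y|} dy` on `ℝ`. -/
def wMeasure : Measure ℝ := volume.withDensity fun y => ENNReal.ofReal (Real.exp (-|y|))

/-- A concrete realization of the completion `ℍ`: `ℝ × L²(e^{-|y|}dy)` with the
`ℓ²`-product structure (recording `(f(0), f')`). -/
abbrev Hsp : Type := WithLp 2 (ℝ × (Lp ℝ 2 wMeasure))

/-- The `Lip₁`-truncation `φ_f(x) = f(0) + ∫₀ˣ ((f'(y) ∧ 1) ∨ (−1)) dy`. -/
def phiOf (f : ℝ → ℝ) : ℝ → ℝ :=
  fun x => f 0 + ∫ y in (0:ℝ)..x, max (min (deriv f y) 1) (-1)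


section Aux
open scoped RealInnerProductSpace

lemma integrable_exp_neg_abs' : Integrable (fun y : ℝ => Real.exp (-|y|)) := by
  have h1 : IntegrableOn (fun y : ℝ => Real.exp (-|y|)) (Ioi 0) := by
    refine (exp_neg_integrableOn_Ioi 0 one_pos).congr_fun (fun y hy => ?_) measurableSet_Ioi
    simp [abs_of_pos (mem_Ioi.mp hy)]
  have h2 : IntegrableOn (fun y : ℝ => Real.exp (-|y|)) (Iic 0) := by
    refine (integrableOn_exp_Iic 0).congr_fun (fun y hy => ?_) measurableSet_Iic
    rw [abs_of_nonpos (mem_Iic.mp hy), neg_neg]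
  have h3 := h2.union h1
  rw [Iic_union_Ioi] at h3; rwa [integrableOn_univ] at h3

lemma wMeasure_eq' : wMeasure = volume.withDensity
    (fun y => ((Real.exp (-|y|)).toNNReal : ℝ≥0∞)) := rfl

lemma expmeas' : Measurable fun y : ℝ => (Real.exp (-|y|)).toNNReal :=
  (Real.measurable_exp.comp (measurable_abs.neg)).real_toNNReal

lemma w_integral (g : ℝ → ℝ) :
    ∫ y, g y ∂wMeasure = ∫ y, g y * Real.exp (-|y|) := by
  rw [wMeasure_eq', integral_withDensity_eq_integral_smul expmeas']
  refine integral_congr_ae (Filter.Eventually.of_forall fun y => ?_)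
  simp [NNReal.smul_def, Real.coe_toNNReal _ (Real.exp_pos _).le, mul_comm]

lemma w_integrable_iff {g : ℝ → ℝ} :
    Integrable g wMeasure ↔ Integrable (fun y => g y * Real.exp (-|y|)) := by
  rw [wMeasure, integrable_withDensity_iff (by fun_prop)
    (Filter.Eventually.of_forall fun y => ENNReal.ofReal_lt_top)]
  simp_rw [ENNReal.toReal_ofReal (Real.exp_pos _).le]

lemma memLp_two_w {g : ℝ → ℝ} (hm : AEStronglyMeasurable g wMeasure)
    (hi : Integrable fun y => g y ^ 2 * Real.exp (-|y|)) : MemLp g 2 wMeasure := by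
  rw [memLp_two_iff_integrable_sq hm, w_integrable_iff]
  exact hi

instance : IsFiniteMeasure wMeasure := by
  constructor
  rw [wMeasure, withDensity_apply _ MeasurableSet.univ, Measure.restrict_univ]
  have h := integrable_exp_neg_abs'.hasFiniteIntegral
  rw [HasFiniteIntegral] at h
  refine lt_of_le_of_lt (le_of_eq ?_) h
  refine lintegral_congr fun y => ?_
  rw [Real.enorm_eq_ofReal_abs, abs_of_pos (Real.exp_pos _)]

instance : Fact ((2:ℝ≥0∞) ≠ ∞) := ⟨by norm_num⟩

lemma norm_toLp_sq {g : ℝ → ℝ} (hg : MemLp g 2 wMeasure) :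
    ‖hg.toLp g‖ ^ 2 = ∫ y, g y ^ 2 * Real.exp (-|y|) := by
  rw [← real_inner_self_eq_norm_sq, L2.inner_def, ← w_integral]
  refine integral_congr_ae ?_
  filter_upwards [hg.coeFn_toLp] with y hy
  simp [hy, sq]

open scoped Classical in
/-- The embedding of functions into `Hsp` via `(f 0, [deriv f])`. -/
def Jmap (f : ℝ → ℝ) : Hsp :=
  (WithLp.equiv 2 _).symm (f 0, if h : MemLp (deriv f) 2 wMeasure then h.toLp _ else 0)

lemma norm_sub_pair (a b : ℝ) (u v : Lp ℝ 2 wMeasure) :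
    ‖((WithLp.equiv 2 _).symm (a,u) : Hsp) - (WithLp.equiv 2 _).symm (b,v)‖^2
      = (a-b)^2 + ‖u-v‖^2 := by
  have h : ((WithLp.equiv 2 (ℝ × Lp ℝ 2 wMeasure)).symm (a,u) : Hsp) -
      (WithLp.equiv 2 _).symm (b,v) = (WithLp.equiv 2 _).symm (a-b, u-v) := rfl
  rw [h, WithLp.prod_norm_sq_eq_of_L2]
  simp [Real.norm_eq_abs, sq_abs]

lemma Jmap_norm_sq {f : ℝ → ℝ} (hm : MemLp (deriv f) 2 wMeasure) :
    ‖Jmap f‖ ^ 2 = f 0 ^ 2 + ∫ y, (deriv f y)^2 * Real.exp (-|y|) := by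
  rw [WithLp.prod_norm_sq_eq_of_L2, Jmap, dif_pos hm, ← norm_toLp_sq hm]
  simp [Real.norm_eq_abs, sq_abs]

lemma Jmap_sub_sq {f g : ℝ → ℝ} (hf : MemLp (deriv f) 2 wMeasure)
    (hg : MemLp (deriv g) 2 wMeasure) :
    ‖Jmap f - Jmap g‖ ^ 2 =
      (f 0 - g 0) ^ 2 + ∫ y, (deriv f y - deriv g y) ^ 2 * Real.exp (-|y|) := by
  rw [Jmap, Jmap, dif_pos hf, dif_pos hg, norm_sub_pair, ← MemLp.toLp_sub,
    norm_toLp_sq (hf.sub hg)]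
  simp only [Pi.sub_apply]

lemma dense_Jmap (z : Hsp) {ε : ℝ} (hε : 0 < ε) : ∃ f, preH f ∧ ‖Jmap f - z‖ < ε := by
  set u : Lp ℝ 2 wMeasure := z.snd with hu
  have hum : MemLp (fun y => u y) 2 wMeasure := Lp.memLp u
  have hε2 : (ENNReal.ofReal (ε/2)) ≠ 0 := by
    simp only [ne_eq, ENNReal.ofReal_eq_zero, not_le]; linarith
  obtain ⟨g, gsupp, hgnorm, gcont, gmem⟩ :=
    hum.exists_hasCompactSupport_eLpNorm_sub_le (by norm_num : (2:ℝ≥0∞) ≠ ∞) hε2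
  set f : ℝ → ℝ := fun x => z.fst + ∫ t in (0:ℝ)..x, g t with hf
  have hderiv : ∀ x, HasDerivAt f (g x) x := fun x =>
    ((gcont.integral_hasStrictDerivAt 0 x).hasDerivAt).const_add z.fst
  have hd : deriv f = g := funext fun x => (hderiv x).deriv
  have hC1 : ContDiff ℝ 1 f := by
    rw [contDiff_one_iff_deriv]
    exact ⟨fun x => (hderiv x).differentiableAt, by rw [hd]; exact gcont⟩
  obtain ⟨C, hC⟩ := gcont.bounded_above_of_compact_support gsupp
  have hint : Integrable fun y => (deriv f y) ^ 2 * Real.exp (-|y|) := by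
    rw [hd]
    refine (integrable_exp_neg_abs'.const_mul (C^2)).mono'
      (((gcont.pow 2).mul (by continuity)).aestronglyMeasurable)
      (Filter.Eventually.of_forall fun y => ?_)
    have h1 : |g y| ≤ C := (Real.norm_eq_abs _ ▸ hC y)
    have h2 : g y ^ 2 ≤ C ^ 2 := by
      rw [← sq_abs]; exact pow_le_pow_left₀ (abs_nonneg _) h1 2
    rw [Real.norm_eq_abs, abs_mul, abs_of_nonneg (Real.exp_pos _).le,
      abs_of_nonneg (sq_nonneg _)]
    exact mul_le_mul_of_nonneg_right h2 (Real.exp_pos _).le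
  have hmem : MemLp (deriv f) 2 wMeasure := hd ▸ gmem
  refine ⟨f, ⟨hC1, hint⟩, ?_⟩
  have hz : z = (WithLp.equiv 2 _).symm (z.fst, u) := rfl
  have hJf : Jmap f = (WithLp.equiv 2 _).symm (f 0, hmem.toLp _) := by
    rw [Jmap, dif_pos hmem]
  have hf0 : f 0 = z.fst := by simp [hf]
  have hnorm2 : ‖Jmap f - z‖^2 = ‖hmem.toLp (deriv f) - u‖^2 := by
    rw [hJf]; nth_rewrite 1 [hz]
    rw [norm_sub_pair, hf0, sub_self]; ring
  have hLp : ‖hmem.toLp (deriv f) - u‖ ≤ ε/2 := by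
    rw [Lp.norm_def]
    have hcoe : (hmem.toLp (deriv f) - u : Lp ℝ 2 wMeasure) =ᵐ[wMeasure]
        (g - fun y => u y) := by
      filter_upwards [Lp.coeFn_sub (hmem.toLp (deriv f)) u, hmem.coeFn_toLp] with y h1 h2
      rw [h1, Pi.sub_apply, h2, hd, Pi.sub_apply]
    rw [eLpNorm_congr_ae hcoe, eLpNorm_sub_comm]
    refine ENNReal.toReal_le_of_le_ofReal (by linarith) hgnorm
  have hfin : ‖Jmap f - z‖ ≤ ε/2 := by
    have h0 : (0:ℝ) ≤ ‖hmem.toLp (deriv f) - u‖ := norm_nonneg _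
    nlinarith [norm_nonneg (Jmap f - z), hnorm2]
  linarith

lemma abs_deriv_le_one {f : ℝ → ℝ} (hf : f ∈ Lip1) (y : ℝ) : |deriv f y| ≤ 1 := by
  have h : deriv f y = fderiv ℝ f y 1 := rfl
  rw [← Real.norm_eq_abs, h]
  calc ‖fderiv ℝ f y 1‖ ≤ ‖fderiv ℝ f y‖ * ‖(1:ℝ)‖ := (fderiv ℝ f y).le_opNorm 1
  _ ≤ 1 := by
      rw [norm_one, mul_one]
      simpa using norm_fderiv_le_of_lipschitz ℝ (hf : LipschitzWith 1 f)

lemma clamp_meas (f : ℝ → ℝ) : Measurable fun y => max (min (deriv f y) 1) (-1) :=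
  ((measurable_deriv f).min measurable_const).max measurable_const

lemma clamp_abs_le (t : ℝ) : |max (min t 1) (-1)| ≤ 1 := by
  rw [abs_le]; constructor
  · exact le_max_right _ _
  · exact max_le (min_le_right _ _) (by norm_num)

lemma clamp_intervalIntegrable (f : ℝ → ℝ) (a b : ℝ) :
    IntervalIntegrable (fun y => max (min (deriv f y) 1) (-1)) volume a b := by
  rw [intervalIntegrable_iff]
  haveI : IsFiniteMeasure (volume.restrict (uIoc a b)) := by
    constructor
    rw [Measure.restrict_apply_univ, uIoc]
    exact measure_Ioc_lt_top
  refine (integrable_const (1:ℝ)).mono' ((clamp_meas f).aestronglyMeasurable) ?_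
  exact Filter.Eventually.of_forall fun y => by
    rw [Real.norm_eq_abs]; exact clamp_abs_le _

lemma phiOf_mem_Lip1 (f : ℝ → ℝ) : phiOf f ∈ Lip1 := by
  refine LipschitzWith.of_dist_le_mul fun x x' => ?_
  have key : phiOf f x - phiOf f x' = ∫ y in x'..x, max (min (deriv f y) 1) (-1) := by
    simp only [phiOf]
    rw [add_sub_add_left_eq_sub]
    exact intervalIntegral.integral_interval_sub_left
      (clamp_intervalIntegrable f 0 x) (clamp_intervalIntegrable f 0 x')
  rw [Real.dist_eq, Real.dist_eq, key, NNReal.coe_one]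
  have h := intervalIntegral.norm_integral_le_of_norm_le_const (a := x') (b := x) (C := 1)
    (f := fun y => max (min (deriv f y) 1) (-1))
    (fun y _ => by simpa using clamp_abs_le (deriv f y))
  simpa using h

lemma phiOf_zero (f : ℝ → ℝ) : phiOf f 0 = f 0 := by simp [phiOf]

lemma phiOf_deriv {f : ℝ → ℝ} (hf : ContDiff ℝ 1 f) (x : ℝ) :
    deriv (phiOf f) x = max (min (deriv f x) 1) (-1) := by
  have hc : Continuous fun y => max (min (deriv f y) 1) (-1) :=
    ((hf.continuous_deriv le_rfl).min continuous_const).max continuous_const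
  have h : ∀ x, HasDerivAt (phiOf f) (max (min (deriv f x) 1) (-1)) x := fun x =>
    ((hc.integral_hasStrictDerivAt 0 x).hasDerivAt).const_add (f 0)
  exact (h x).deriv

lemma clamp_dist_le {a t : ℝ} (ha : |a| ≤ 1) :
    (a - max (min t 1) (-1))^2 ≤ (a - t)^2 := by
  rw [abs_le] at ha
  rcases le_total t (-1) with h | h
  · rw [min_eq_left (le_trans h (by norm_num)), max_eq_right h]
    nlinarith
  rcases le_total 1 t with h' | h'
  · rw [min_eq_right h', max_eq_left (by norm_num)]
    nlinarith
  · rw [min_eq_left h', max_eq_left h]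

lemma lip1_integrable {f : ℝ → ℝ} (hf : f ∈ Lip1) :
    Integrable fun y => (deriv f y) ^ 2 * Real.exp (-|y|) := by
  refine integrable_exp_neg_abs'.mono'
    (((measurable_deriv f).pow_const 2).aestronglyMeasurable.mul
      (Real.continuous_exp.comp (continuous_abs.neg)).aestronglyMeasurable)
    (Filter.Eventually.of_forall fun y => ?_)
  rw [Real.norm_eq_abs, abs_mul, abs_of_nonneg (Real.exp_pos _).le,
    abs_of_nonneg (sq_nonneg _)]
  have h1 : (deriv f y)^2 ≤ 1 := by
    rw [← sq_abs]
    nlinarith [abs_deriv_le_one hf y, abs_nonneg (deriv f y)]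
  nlinarith [Real.exp_pos (-|y|)]

lemma lip1_memLp {f : ℝ → ℝ} (hf : f ∈ Lip1) : MemLp (deriv f) 2 wMeasure :=
  memLp_two_w (measurable_deriv f).aestronglyMeasurable (lip1_integrable hf)

lemma preH_memLp {f : ℝ → ℝ} (hf : preH f) : MemLp (deriv f) 2 wMeasure :=
  memLp_two_w (measurable_deriv f).aestronglyMeasurable hf.2

lemma Hsp_separable : TopologicalSpace.SeparableSpace Hsp := by
  have h1 : SecondCountableTopology (Lp ℝ 2 wMeasure) := inferInstance
  have h2 : SecondCountableTopology (ℝ × Lp ℝ 2 wMeasure) := inferInstance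
  have h3 : SecondCountableTopology Hsp := inferInstance
  exact TopologicalSpace.SecondCountableTopology.to_separableSpace

end Aux

/-- Formalization of the `ℍ`-space construction in the proof of Lemma 2.1:
the completion `ℍ` of `ℍ₀` under `|·|_ℍ` is a separable Hilbert space (realized
as `ℝ × L²(e^{-|y|}dy)`, into which `ℍ₀` embeds isometrically with dense range);
`Lip₁(ℝ) ⊂ ℍ`; for every `f` the truncation `φ_f` belongs to `Lip₁(ℝ)`; and
there is a countable set `Λ = {φ_f : f ∈ Λ_ℍ} ⊂ Lip₁(ℝ)` (with `Λ_ℍ`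
countable) which is `|·|_ℍ`-dense in `Lip₁(ℝ)`. -/
theorem Hspace_properties :
    CompleteSpace Hsp ∧
    TopologicalSpace.SeparableSpace Hsp ∧
    (∀ f ∈ Lip1, Integrable fun y => (deriv f y) ^ 2 * Real.exp (-|y|)) ∧
    (∃ J : (ℝ → ℝ) → Hsp,
      (∀ f, preH f → ‖J f‖ ^ 2 = HnormSq f) ∧
      (∀ f g, preH f → preH g →
        ‖J f - J g‖ ^ 2 =
          (f 0 - g 0) ^ 2 + ∫ y, (deriv f y - deriv g y) ^ 2 * Real.exp (-|y|)) ∧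
      DenseRange fun f : { f : ℝ → ℝ // preH f } => J f.1) ∧
    (∀ f : ℝ → ℝ, phiOf f ∈ Lip1) ∧
    (∃ Λ₀ : Set (ℝ → ℝ), Λ₀.Countable ∧ (phiOf '' Λ₀ ⊆ Lip1) ∧
      ∀ f ∈ Lip1, ∀ ε > (0:ℝ), ∃ g ∈ phiOf '' Λ₀,
        Real.sqrt ((f 0 - g 0) ^ 2 +
            ∫ y, (deriv f y - deriv g y) ^ 2 * Real.exp (-|y|)) < ε) := by
  haveI hsep := Hsp_separable
  refine ⟨inferInstance, hsep, fun f hf => lip1_integrable hf,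
    ⟨Jmap, fun f hf => ?_, fun f g hf hg => Jmap_sub_sq (preH_memLp hf) (preH_memLp hg), ?_⟩,
    phiOf_mem_Lip1, ?_⟩
  · rw [HnormSq]; exact Jmap_norm_sq (preH_memLp hf)
  · rw [Metric.denseRange_iff]
    intro z r hr
    obtain ⟨f, hf, h⟩ := dense_Jmap z hr
    exact ⟨⟨f, hf⟩, by rwa [dist_eq_norm, ← norm_sub_rev]⟩
  · obtain ⟨D, Dcount, Ddense⟩ := TopologicalSpace.exists_countable_dense Hsp
    have hch : ∀ (d : Hsp) (n : ℕ), ∃ f, preH f ∧ ‖Jmap f - d‖ < 1/(n+1) := fun d n =>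
      dense_Jmap d (by positivity)
    choose P hP1 hP2 using hch
    refine ⟨⋃ n : ℕ, (fun d => P d n) '' D, countable_iUnion fun n => Dcount.image _,
      ?_, ?_⟩
    · rintro g ⟨h, -, rfl⟩; exact phiOf_mem_Lip1 h
    · intro f hf ε hε
      have hm : MemLp (deriv f) 2 wMeasure := lip1_memLp hf
      obtain ⟨d, hdD, hdz⟩ := Ddense.exists_dist_lt (Jmap f) (show (0:ℝ) < ε/4 by linarith)
      obtain ⟨n, hn⟩ := exists_nat_one_div_lt (show (0:ℝ) < ε/4 by linarith)
      set h := P d n with hhdef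
      have hh : preH h := hP1 d n
      have hmh : MemLp (deriv h) 2 wMeasure := preH_memLp hh
      have hJh : ‖Jmap h - Jmap f‖ < ε/2 := by
        have h1 : ‖Jmap h - d‖ < 1/(n+1) := hP2 d n
        have h2 : ‖d - Jmap f‖ < ε/4 := by rw [← dist_eq_norm, dist_comm]; exact hdz
        calc ‖Jmap h - Jmap f‖ ≤ ‖Jmap h - d‖ + ‖d - Jmap f‖ := by
              have := norm_add_le (Jmap h - d) (d - Jmap f)
              simpa using this
        _ < 1/(n+1) + ε/4 := by exact add_lt_add h1 h2
        _ < ε/4 + ε/4 := by exact add_lt_add_left hn _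
        _ = ε/2 := by ring
      refine ⟨phiOf h, mem_image_of_mem _ (mem_iUnion.mpr ⟨n, mem_image_of_mem _ hdD⟩), ?_⟩
      have hgd : deriv (phiOf h) = fun y => max (min (deriv h y) 1) (-1) :=
        funext (phiOf_deriv hh.1)
      have I1 : Integrable fun y => (deriv f y - deriv (phiOf h) y)^2 * Real.exp (-|y|) := by
        rw [hgd]
        refine (integrable_exp_neg_abs'.const_mul 4).mono'
          ((((measurable_deriv f).sub (clamp_meas h)).pow_const 2).aestronglyMeasurable.mul
            (Real.continuous_exp.comp (continuous_abs.neg)).aestronglyMeasurable)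
          (Filter.Eventually.of_forall fun y => ?_)
        rw [Real.norm_eq_abs, abs_mul, abs_of_nonneg (Real.exp_pos _).le,
          abs_of_nonneg (sq_nonneg _)]
        have hb1 := abs_le.mp (abs_deriv_le_one hf y)
        have hb2 := abs_le.mp (clamp_abs_le (deriv h y))
        show (deriv f y - (deriv h y ⊓ 1 ⊔ -1))^2 * Real.exp (-|y|) ≤ 4 * Real.exp (-|y|)
        have hsq : (deriv f y - (deriv h y ⊓ 1 ⊔ -1))^2 ≤ 4 := by
          nlinarith [hb1.1, hb1.2, hb2.1, hb2.2]
        exact mul_le_mul_of_nonneg_right hsq (Real.exp_pos _).le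
      have I2 : Integrable fun y => (deriv f y - deriv h y)^2 * Real.exp (-|y|) := by
        have hI : Integrable (fun y => ((deriv f - deriv h) y)^2) wMeasure :=
          (memLp_two_iff_integrable_sq (hm.sub hmh).aestronglyMeasurable).mp (hm.sub hmh)
        have hI2 := w_integrable_iff.mp hI
        simpa [Pi.sub_apply] using hI2
      have hBA : (f 0 - phiOf h 0)^2 +
          ∫ y, (deriv f y - deriv (phiOf h) y)^2 * Real.exp (-|y|)
          ≤ (f 0 - h 0)^2 + ∫ y, (deriv f y - deriv h y)^2 * Real.exp (-|y|) := by
        rw [phiOf_zero]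
        refine add_le_add_right (integral_mono I1 I2 fun y => ?_) _
        rw [hgd]
        exact mul_le_mul_of_nonneg_right (clamp_dist_le (abs_deriv_le_one hf y))
          (Real.exp_pos _).le
      have hA : (f 0 - h 0)^2 + ∫ y, (deriv f y - deriv h y)^2 * Real.exp (-|y|)
          = ‖Jmap f - Jmap h‖^2 := (Jmap_sub_sq hm hmh).symm
      calc Real.sqrt ((f 0 - phiOf h 0)^2 +
            ∫ y, (deriv f y - deriv (phiOf h) y)^2 * Real.exp (-|y|))
          ≤ Real.sqrt (‖Jmap f - Jmap h‖^2) := Real.sqrt_le_sqrt (hA ▸ hBA)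
      _ = ‖Jmap f - Jmap h‖ := Real.sqrt_sq (norm_nonneg _)
      _ = ‖Jmap h - Jmap f‖ := norm_sub_rev _ _
      _ < ε/2 := hJh
      _ < ε := by linarith


end
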